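/- Finite composability of Rényi divergence: let I, J be finite sets, d₁, d₂ subprobability mass functions on J, and h, k : J → (subprobability mass functions on I). Define the pushforwards h♯d₁ (i) = ∑_{j} d₁(j)·h(j)(i) and similarly k♯d₂. Then D^α(h♯d₁ ‖ k♯d₂) ≤ D^α(d₁‖d₂) + sup_{j∈J} D^α(h(j)‖k(j)) for every α > 1. -/

import Mathlib

open Finset ENNReal

/-- Rényi divergence of order `α` between (sub)probability mass functions on a
finite set, valued in the extended reals, with the conventions
`0 ^ α * 0 ^ (1-α) = 0` and `x ^ α * 0 ^ (1-α) = ∞` for `x > 0` (from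
`ENNReal.rpow`), and `ENNReal.log 0 = ⊥`, `ENNReal.log ∞ = ⊤`. -/
noncomputable def renyiDE {I : Type*} [Fintype I] (α : ℝ) (p q : I → ℝ≥0∞) : EReal :=
  (((α - 1)⁻¹ : ℝ) : EReal) * ENNReal.log (∑ i, p i ^ α * q i ^ (1 - α))

lemma ereal_mul_add_of_pos {c : ℝ} (hc : 0 < c) (x y : EReal) :
    (c : EReal) * (x + y) = (c : EReal) * x + (c : EReal) * y := by
  induction x using EReal.rec <;> induction y using EReal.rec <;>
    simp [EReal.coe_mul_bot_of_pos hc, EReal.coe_mul_top_of_pos hc,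
      ← EReal.coe_add, ← EReal.coe_mul, mul_add]

/-- Joint subadditivity of `(a, b) ↦ a ^ α * b ^ (1 - α)` for `α > 1`. -/
lemma key_pow {J : Type*} (s : Finset J) (a b : J → ℝ≥0∞)
    (ha : ∀ j ∈ s, a j ≠ ⊤) (hb : ∀ j ∈ s, b j ≠ ⊤) {α : ℝ} (hα : 1 < α) :
    (∑ j ∈ s, a j) ^ α * (∑ j ∈ s, b j) ^ (1 - α) ≤ ∑ j ∈ s, a j ^ α * b j ^ (1 - α) := by
  have hα0 : (0 : ℝ) < α := lt_trans one_pos hα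
  by_cases hbad : ∃ j ∈ s, b j = 0 ∧ a j ≠ 0
  · obtain ⟨j, hj, hbj, haj⟩ := hbad
    have ht : a j ^ α * b j ^ (1 - α) = ⊤ := by
      rw [hbj, ENNReal.zero_rpow_of_neg (by linarith), ENNReal.mul_top]
      intro hzero
      rw [ENNReal.rpow_eq_zero_iff] at hzero
      rcases hzero with ⟨h1, _⟩ | ⟨h1, _⟩
      · exact haj h1
      · exact ha j hj h1
    have hs : ∑ j ∈ s, a j ^ α * b j ^ (1 - α) = ⊤ := ENNReal.sum_eq_top.2 ⟨j, hj, ht⟩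
    simp [hs]
  · push_neg at hbad
    set A := ∑ j ∈ s, a j with hA
    set B := ∑ j ∈ s, b j with hB
    have hBtop : B ≠ ⊤ := (ENNReal.sum_lt_top.2 fun j hj => (hb j hj).lt_top).ne
    by_cases hB0 : B = 0
    · have hb0 : ∀ j ∈ s, b j = 0 := by
        intro j hj
        exact (Finset.sum_eq_zero_iff.1 hB0) j hj
      have hA0 : A = 0 := Finset.sum_eq_zero fun j hj => hbad j hj (hb0 j hj)
      rw [hA0, ENNReal.zero_rpow_of_pos hα0, zero_mul]
      exact zero_le
    · have hsum_div : ∀ f : J → ℝ≥0∞, ∑ j ∈ s, f j / B = (∑ j ∈ s, f j) / B := by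
        intro f
        simp only [div_eq_mul_inv]
        rw [Finset.sum_mul]
      have hw : ∑ j ∈ s, b j / B = 1 := by
        rw [hsum_div, ENNReal.div_self hB0 hBtop]
      have jensen := ENNReal.rpow_arith_mean_le_arith_mean_rpow s (fun j => b j / B)
        (fun j => a j / b j) hw hα.le
      have hwz : ∀ j ∈ s, (b j / B) * (a j / b j) = a j / B := by
        intro j hj
        rcases eq_or_ne (b j) 0 with h0 | h0
        · simp [h0, hbad j hj h0]
        · rw [div_eq_mul_inv, div_eq_mul_inv, div_eq_mul_inv,
            show b j * B⁻¹ * (a j * (b j)⁻¹) = a j * B⁻¹ * (b j * (b j)⁻¹) by ring,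
            ENNReal.mul_inv_cancel h0 (hb j hj), mul_one]
      rw [Finset.sum_congr rfl hwz, hsum_div] at jensen
      have hL : B * (A / B) ^ α = A ^ α * B ^ (1 - α) := by
        rw [ENNReal.div_rpow_of_nonneg _ _ hα0.le, ENNReal.rpow_sub 1 α hB0 hBtop,
          ENNReal.rpow_one, div_eq_mul_inv, div_eq_mul_inv]
        ring
      have hR : ∀ j ∈ s, B * ((b j / B) * (a j / b j) ^ α) = a j ^ α * b j ^ (1 - α) := by
        intro j hj
        rcases eq_or_ne (b j) 0 with h0 | h0
        · simp [h0, hbad j hj h0, ENNReal.zero_rpow_of_pos hα0]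
        · rw [ENNReal.div_rpow_of_nonneg _ _ hα0.le, ENNReal.rpow_sub 1 α h0 (hb j hj),
            ENNReal.rpow_one, div_eq_mul_inv, div_eq_mul_inv, div_eq_mul_inv,
            show B * (b j * B⁻¹ * (a j ^ α * (b j ^ α)⁻¹)) =
              (B * B⁻¹) * (b j * (a j ^ α * (b j ^ α)⁻¹)) by ring,
            ENNReal.mul_inv_cancel hB0 hBtop, one_mul]
          ring
      calc A ^ α * B ^ (1 - α) = B * (A / B) ^ α := hL.symm
        _ ≤ B * ∑ j ∈ s, (b j / B) * (a j / b j) ^ α := mul_le_mul_right jensen B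
        _ = ∑ j ∈ s, B * ((b j / B) * (a j / b j) ^ α) := Finset.mul_sum _ _ _
        _ = ∑ j ∈ s, a j ^ α * b j ^ (1 - α) := Finset.sum_congr rfl hR

/-- Finite composability of Rényi divergence: for subprobability mass functions
`d₁, d₂` on a finite set `J` and kernels `h, k : J → subprob(I)`,
`D^α(h♯d₁ ‖ k♯d₂) ≤ D^α(d₁‖d₂) + sup_j D^α(h j ‖ k j)`. -/
theorem renyi_finite_composable {J I : Type*} [Fintype J] [Fintype I]
    (d₁ d₂ : J → ℝ≥0∞) (h k : J → I → ℝ≥0∞)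
    (hd₁ : ∑ j, d₁ j ≤ 1) (hd₂ : ∑ j, d₂ j ≤ 1)
    (hh : ∀ j, ∑ i, h j i ≤ 1) (hk : ∀ j, ∑ i, k j i ≤ 1)
    (α : ℝ) (hα : 1 < α) :
    renyiDE α (fun i => ∑ j, d₁ j * h j i) (fun i => ∑ j, d₂ j * k j i) ≤
      renyiDE α d₁ d₂ + ⨆ j, renyiDE α (h j) (k j) := by
  have hα0 : (0 : ℝ) < α := lt_trans one_pos hα
  have hc : (0 : ℝ) < (α - 1)⁻¹ := inv_pos.2 (by linarith)
  have hd1t : ∀ j, d₁ j ≠ ⊤ := fun j =>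
    (((Finset.single_le_sum (fun i _ => zero_le) (Finset.mem_univ j)).trans
      hd₁).trans_lt ENNReal.one_lt_top).ne
  have hd2t : ∀ j, d₂ j ≠ ⊤ := fun j =>
    (((Finset.single_le_sum (fun i _ => zero_le) (Finset.mem_univ j)).trans
      hd₂).trans_lt ENNReal.one_lt_top).ne
  have hht : ∀ j i, h j i ≠ ⊤ := fun j i =>
    (((Finset.single_le_sum (fun i _ => zero_le) (Finset.mem_univ i)).trans
      (hh j)).trans_lt ENNReal.one_lt_top).ne
  have hkt : ∀ j i, k j i ≠ ⊤ := fun j i =>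
    (((Finset.single_le_sum (fun i _ => zero_le) (Finset.mem_univ i)).trans
      (hk j)).trans_lt ENNReal.one_lt_top).ne
  rcases isEmpty_or_nonempty J with hJ | hJ
  · have hzero : (∑ i, (∑ j, d₁ j * h j i) ^ α * (∑ j, d₂ j * k j i) ^ (1 - α)) = 0 := by
      apply Finset.sum_eq_zero
      intro i _
      simp [Finset.univ_eq_empty, ENNReal.zero_rpow_of_pos hα0]
    simp only [renyiDE, hzero, ENNReal.log_zero, EReal.coe_mul_bot_of_pos hc]
    exact bot_le
  · obtain ⟨j0, -, hj0⟩ := Finset.exists_max_image Finset.univ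
      (fun j => ∑ i, h j i ^ α * k j i ^ (1 - α)) Finset.univ_nonempty
    have hmain : (∑ i, (∑ j, d₁ j * h j i) ^ α * (∑ j, d₂ j * k j i) ^ (1 - α)) ≤
        (∑ j, d₁ j ^ α * d₂ j ^ (1 - α)) * (∑ i, h j0 i ^ α * k j0 i ^ (1 - α)) := by
      calc (∑ i, (∑ j, d₁ j * h j i) ^ α * (∑ j, d₂ j * k j i) ^ (1 - α))
          ≤ ∑ i, ∑ j, (d₁ j * h j i) ^ α * (d₂ j * k j i) ^ (1 - α) := by
            refine Finset.sum_le_sum fun i _ => key_pow _ _ _ (fun j _ => ?_) (fun j _ => ?_) hα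
            · exact ENNReal.mul_ne_top (hd1t j) (hht j i)
            · exact ENNReal.mul_ne_top (hd2t j) (hkt j i)
        _ = ∑ j, ∑ i, (d₁ j ^ α * d₂ j ^ (1 - α)) * (h j i ^ α * k j i ^ (1 - α)) := by
            rw [Finset.sum_comm]
            refine Finset.sum_congr rfl fun j _ => Finset.sum_congr rfl fun i _ => ?_
            rw [ENNReal.mul_rpow_of_ne_top (hd1t j) (hht j i),
              ENNReal.mul_rpow_of_ne_top (hd2t j) (hkt j i)]
            ring
        _ = ∑ j, (d₁ j ^ α * d₂ j ^ (1 - α)) * ∑ i, h j i ^ α * k j i ^ (1 - α) := by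
            simp [Finset.mul_sum]
        _ ≤ ∑ j, (d₁ j ^ α * d₂ j ^ (1 - α)) * (∑ i, h j0 i ^ α * k j0 i ^ (1 - α)) :=
            Finset.sum_le_sum fun j _ => mul_le_mul_right (hj0 j (Finset.mem_univ j)) _
        _ = _ := by rw [← Finset.sum_mul]
    have hlog := ENNReal.log_monotone hmain
    rw [ENNReal.log_mul_add] at hlog
    simp only [renyiDE]
    calc (((α - 1)⁻¹ : ℝ) : EReal) *
          ENNReal.log (∑ i, (∑ j, d₁ j * h j i) ^ α * (∑ j, d₂ j * k j i) ^ (1 - α))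
        ≤ (((α - 1)⁻¹ : ℝ) : EReal) *
            (ENNReal.log (∑ j, d₁ j ^ α * d₂ j ^ (1 - α)) +
              ENNReal.log (∑ i, h j0 i ^ α * k j0 i ^ (1 - α))) :=
          mul_le_mul_of_nonneg_left hlog (by exact_mod_cast hc.le)
      _ = (((α - 1)⁻¹ : ℝ) : EReal) * ENNReal.log (∑ j, d₁ j ^ α * d₂ j ^ (1 - α)) +
            (((α - 1)⁻¹ : ℝ) : EReal) * ENNReal.log (∑ i, h j0 i ^ α * k j0 i ^ (1 - α)) :=
          ereal_mul_add_of_pos hc _ _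
      _ ≤ _ := by
          refine add_le_add le_rfl ?_
          exact le_iSup (fun j => (((α - 1)⁻¹ : ℝ) : EReal) *
            ENNReal.log (∑ i, h j i ^ α * k j i ^ (1 - α))) j0
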